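/- Define the discrete functions F_K on nodes X(K,n) = Σ_{m=0}^{n-1} C(K+1,m) by F_K(X(K,n)) = C(K,n-1) for n = 0,...,K+2. Then for all K ≥ 1 and all 1 ≤ n ≤ K+1: F_K(X(K,n)) = F_{K-1}((X(K,n)+F_K(X(K,n)))/2) + F_{K-1}((X(K,n)-F_K(X(K,n)))/2). That is, (X(K,n)±F(K,n))/2 are themselves nodes of level K-1 (equal to X(K-1,n) and X(K-1,n-1) respectively), and C(K,n-1) = C(K-1,n-1) + C(K-1,n-2). -/

import Mathlib

/-- Extended binomial coefficient: `C(N,k) = 0` for `k < 0` or `k > N`. -/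
def extChoose (N : ℕ) (k : ℤ) : ℕ :=
  if 0 ≤ k then N.choose k.toNat else 0

/-- `F(K,n) = C(K, n-1)`. -/
def Fnode (K : ℕ) (n : ℤ) : ℕ := extChoose K (n - 1)

/-- `X(K,n) = Σ_{m=0}^{n-1} C(K+1,m)`. -/
def Xnode (K : ℕ) (n : ℤ) : ℕ :=
  ∑ m ∈ Finset.range n.toNat, (K + 1).choose m

lemma sum_choose_key (K t : ℕ) :
    ∑ m ∈ Finset.range (t + 1), (K + 1).choose m =
      (∑ m ∈ Finset.range (t + 1), K.choose m) + ∑ m ∈ Finset.range t, K.choose m := by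
  induction t with
  | zero => simp
  | succ t ih =>
    rw [Finset.sum_range_succ, ih, Finset.sum_range_succ (n := t + 1),
      Finset.sum_range_succ (n := t), Nat.choose_succ_succ]
    ring

/-- Discrete part of the Triangle Theorem: if `g` takes the values `F(K,·)` on the
level-`K` nodes and `g'` the values `F(K-1,·)` on the level-`(K-1)` nodes, then `g`
satisfies the Conway Model Equation through `g'` at every inner node. -/
theorem triangle_theorem_discrete
    (K : ℕ) (hK : 1 ≤ K) (g g' : ℤ → ℤ)
    (hg : ∀ n : ℤ, 0 ≤ n → n ≤ K + 2 → g (Xnode K n) = Fnode K n)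
    (hg' : ∀ n : ℤ, 0 ≤ n → n ≤ K + 1 → g' (Xnode (K - 1) n) = Fnode (K - 1) n) :
    ∀ n : ℤ, 1 ≤ n → n ≤ K + 1 →
      ((Xnode K n : ℤ) + Fnode K n) / 2 = Xnode (K - 1) n ∧
      ((Xnode K n : ℤ) - Fnode K n) / 2 = Xnode (K - 1) (n - 1) ∧
      (Fnode K n : ℤ) = Fnode (K - 1) n + Fnode (K - 1) (n - 1) ∧
      g (Xnode K n) =
        g' (((Xnode K n : ℤ) + g (Xnode K n)) / 2) +
        g' (((Xnode K n : ℤ) - g (Xnode K n)) / 2) := by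
  intro n h1 h2
  obtain ⟨t, rfl⟩ : ∃ t : ℕ, n = (t : ℤ) := ⟨n.toNat, by omega⟩
  have ht1 : 1 ≤ t := by exact_mod_cast h1
  have ht2 : t ≤ K + 1 := by exact_mod_cast h2
  have hKm : K - 1 + 1 = K := by omega
  have htm : t - 1 + 1 = t := by omega
  -- values of the nodes
  have hFK : Fnode K t = K.choose (t - 1) := by
    have : ((t : ℤ) - 1).toNat = t - 1 := by omega
    simp [Fnode, extChoose, show (0:ℤ) ≤ (t:ℤ) - 1 by omega, this]; intro h'; omega
  set A := ∑ m ∈ Finset.range t, K.choose m with hA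
  set B := ∑ m ∈ Finset.range (t - 1), K.choose m with hB
  have hXK : Xnode K t = A + B := by
    have := sum_choose_key K (t - 1)
    rw [htm] at this
    simpa [Xnode] using this
  have hAB : A = B + K.choose (t - 1) := by
    rw [hA, hB, ← htm, Finset.sum_range_succ, htm]
  have hX1 : Xnode (K - 1) t = A := by simp [Xnode, hKm, hA]
  have hX2 : Xnode (K - 1) ((t : ℤ) - 1) = B := by
    have : ((t : ℤ) - 1).toNat = t - 1 := by omega
    simp [Xnode, hKm, this, hB]
  have e1 : ((Xnode K t : ℤ) + Fnode K t) / 2 = Xnode (K - 1) t := by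
    rw [hXK, hFK, hX1]; push_cast; omega
  have e2 : ((Xnode K t : ℤ) - Fnode K t) / 2 = Xnode (K - 1) ((t : ℤ) - 1) := by
    rw [hXK, hFK, hX2]; push_cast; omega
  -- Pascal identity for Fnode
  have hF1 : Fnode (K - 1) t = (K - 1).choose (t - 1) := by
    have : ((t : ℤ) - 1).toNat = t - 1 := by omega
    simp [Fnode, extChoose, show (0:ℤ) ≤ (t:ℤ) - 1 by omega, this]; intro h'; omega
  have e3 : (Fnode K t : ℤ) = Fnode (K - 1) t + Fnode (K - 1) ((t : ℤ) - 1) := by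
    rcases Nat.eq_or_lt_of_le ht1 with h | h
    · -- t = 1
      have hF2 : Fnode (K - 1) ((t : ℤ) - 1) = 0 := by
        simp [Fnode, extChoose, ← h]
      rw [hFK, hF1, hF2, ← h]
      simp
    · -- t ≥ 2
      have ht2' : 2 ≤ t := h
      have hF2 : Fnode (K - 1) ((t : ℤ) - 1) = (K - 1).choose (t - 2) := by
        have h0 : (0:ℤ) ≤ (t:ℤ) - 1 - 1 := by omega
        have : ((t : ℤ) - 1 - 1).toNat = t - 2 := by omega
        simp [Fnode, extChoose, h0, this]; intro h'; omega
      have hp : K.choose (t - 1) = (K - 1).choose (t - 2) + (K - 1).choose (t - 1) := by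
        have := Nat.choose_succ_succ (K - 1) (t - 2)
        simpa [Nat.succ_eq_add_one, show K - 1 + 1 = K by omega,
          show t - 2 + 1 = t - 1 by omega] using this
      rw [hFK, hF1, hF2, hp]; push_cast [Nat.cast_add]; ring
  refine ⟨e1, e2, e3, ?_⟩
  have hgn : g (Xnode K t) = Fnode K t := hg t (by positivity) (by omega)
  rw [hgn, e1, e2, hg' t (by positivity) (by exact_mod_cast h2),
    hg' ((t : ℤ) - 1) (by omega) (by omega), ← e3]
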